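/- (Identification of the cross-world mean, discrete case.) Let Z ∈ {0,1}, U = (D1,D0) with D1 ≥ D0 binary, M, X, Y discrete/integrable. Assume: (i) consistency D = Z D1 + (1−Z) D0, M = M_{Z D_Z}, Y = Y_{Z D_Z M}; (ii) (D_z, M_{z'd'}, Y_{z*d'm*}) ⊥ Z | X for all indices; (iii) (M_{zd}, Y_{z'dm'}) ⊥ U | X; (iv) M_{zd} ⊥ Y_{z'd'm'} | (Z, U, X); (v) positivity of all conditioning events. Then for any z, z' and any stratum u = (d1,d0) with P(U=u) > 0, E[Y_{z M_{z'}} | U = u] = Σ_x (P(U=u | X=x)/P(U=u)) · Σ_m E[Y | Z=z, D=d_z, M=m, X=x] · P(M=m | Z=z', D=d_{z'}, X=x) · P(X=x), where d_z = d1 if z=1 and d0 if z=0. -/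

import Mathlib

open Finset Classical

/-- Probability of an event under a pmf on a finite sample space. -/
noncomputable def Pr {Ω : Type*} [Fintype Ω] (p : Ω → ℝ) (A : Ω → Prop) : ℝ :=
  ∑ ω, if A ω then p ω else 0

/-- Expectation under a pmf on a finite sample space. -/
noncomputable def Ex {Ω : Type*} [Fintype Ω] (p : Ω → ℝ) (f : Ω → ℝ) : ℝ :=
  ∑ ω, p ω * f ω

/-- Expectation of `f` restricted to the event `A` (an auxiliary definition that
fixes the decidability instance once and for all). -/
noncomputable def ExC {Ω : Type*} [Fintype Ω] (p : Ω → ℝ) (A : Ω → Prop) (f : Ω → ℝ) : ℝ :=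
  Ex p (fun ω => if A ω then f ω else 0)

theorem Ex_eq_ExC {Ω : Type*} [Fintype Ω] (p : Ω → ℝ) (A : Ω → Prop) (f : Ω → ℝ)
    [inst : ∀ ω, Decidable (A ω)] :
    Ex p (fun ω => if A ω then f ω else 0) = ExC p A f := by
  unfold ExC Ex
  refine Finset.sum_congr rfl fun ω _ => ?_
  by_cases hA : A ω <;> simp [hA]

section helpers
variable {Ω : Type*} [Fintype Ω] {p : Ω → ℝ}

theorem Pr_congr {A B : Ω → Prop} (h : ∀ ω, A ω ↔ B ω) : Pr p A = Pr p B :=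
  Finset.sum_congr rfl fun ω _ => if_congr (h ω) rfl rfl

theorem Pr_congr' (hp : ∀ ω, 0 ≤ p ω) {A B : Ω → Prop}
    (h : ∀ ω, 0 < p ω → (A ω ↔ B ω)) : Pr p A = Pr p B := by
  refine Finset.sum_congr rfl fun ω _ => ?_
  rcases (hp ω).lt_or_eq with h0 | h0
  · exact if_congr (h ω h0) rfl rfl
  · simp [← h0]

theorem Pr_nonneg (hp : ∀ ω, 0 ≤ p ω) (A : Ω → Prop) : 0 ≤ Pr p A :=
  Finset.sum_nonneg fun ω _ => by by_cases hA : A ω <;> simp [hA, hp ω]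

theorem Pr_eq_zero (hp : ∀ ω, 0 ≤ p ω) {A : Ω → Prop}
    (h : ∀ ω, 0 < p ω → ¬ A ω) : Pr p A = 0 := by
  refine Finset.sum_eq_zero fun ω _ => ?_
  rcases (hp ω).lt_or_eq with h0 | h0
  · simp [h ω h0]
  · simp [← h0]

theorem Pr_le_mono (hp : ∀ ω, 0 ≤ p ω) {A B : Ω → Prop}
    (h : ∀ ω, A ω → B ω) : Pr p A ≤ Pr p B := by
  refine Finset.sum_le_sum fun ω _ => ?_
  by_cases hA : A ω
  · simp [hA, h ω hA]
  · by_cases hB : B ω <;> simp [hA, hB, hp ω]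

theorem Pr_zero_mono (hp : ∀ ω, 0 ≤ p ω) {A B : Ω → Prop} (hsub : ∀ ω, B ω → A ω)
    (h : Pr p A = 0) : Pr p B = 0 :=
  le_antisymm (h ▸ Pr_le_mono hp hsub) (Pr_nonneg hp B)

theorem Pr_support_zero (hp : ∀ ω, 0 ≤ p ω) {A : Ω → Prop} (h : Pr p A = 0) :
    ∀ ω, A ω → p ω = 0 := by
  intro ω hA
  have h0 : ∀ ω ∈ Finset.univ, (0:ℝ) ≤ if A ω then p ω else 0 := fun ω _ => by
    by_cases hA : A ω <;> simp [hA, hp ω]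
  have := (Finset.sum_eq_zero_iff_of_nonneg h0).1 h ω (mem_univ ω)
  simpa [hA] using this

theorem Ex_zero_mono (hp : ∀ ω, 0 ≤ p ω) {A B : Ω → Prop} (hsub : ∀ ω, B ω → A ω)
    (h : Pr p A = 0) (f : Ω → ℝ) :
    ExC p B f = 0 := by
  refine Finset.sum_eq_zero fun ω _ => ?_
  by_cases hB : B ω
  · simp [hB, Pr_support_zero hp h ω (hsub ω hB)]
  · simp [hB]

theorem Ex_congr {f g : Ω → ℝ} {A B : Ω → Prop} (hiff : ∀ ω, A ω ↔ B ω)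
    (hfg : ∀ ω, A ω → f ω = g ω) :
    ExC p A f = ExC p B g := by
  refine Finset.sum_congr rfl fun ω _ => ?_
  by_cases hA : A ω
  · simp [hA, (hiff ω).1 hA, hfg ω hA]
  · have hB : ¬ B ω := fun hB => hA ((hiff ω).2 hB)
    simp [hA, hB]

theorem Pr_fiber {α : Type*} [Fintype α] (g : Ω → α) (A : Ω → Prop) :
    Pr p A = ∑ v, Pr p (fun ω => g ω = v ∧ A ω) := by
  have key : ∀ ω, (if A ω then p ω else 0)
      = ∑ v, (if g ω = v ∧ A ω then p ω else 0) := by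
    intro ω
    rw [Finset.sum_eq_single (g ω)]
    · simp
    · intro v _ hv
      exact if_neg (fun h : g ω = v ∧ A ω => hv h.1.symm)
    · simp
  unfold Pr
  calc (∑ ω, if A ω then p ω else 0)
      = ∑ ω, ∑ v, (if g ω = v ∧ A ω then p ω else 0) :=
        Finset.sum_congr rfl fun ω _ => key ω
    _ = ∑ v, ∑ ω, (if g ω = v ∧ A ω then p ω else 0) := Finset.sum_comm
    _ = ∑ v, Pr p (fun ω => g ω = v ∧ A ω) := by
        refine Finset.sum_congr rfl fun v _ => Finset.sum_congr rfl fun ω _ => ?_; congr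

theorem Ex_fiber {α : Type*} [Fintype α] (g : Ω → α) (f : Ω → ℝ) (A : Ω → Prop) :
    ExC p A f = ∑ v, ExC p (fun ω => g ω = v ∧ A ω) f := by
  have key : ∀ ω, (p ω * if A ω then f ω else 0)
      = ∑ v, (p ω * if g ω = v ∧ A ω then f ω else 0) := by
    intro ω
    rw [Finset.sum_eq_single (g ω)]
    · simp
    · intro v _ hv
      rw [if_neg (fun h : g ω = v ∧ A ω => hv h.1.symm), mul_zero]
    · simp
  unfold ExC Ex
  calc (∑ ω, p ω * if A ω then f ω else 0)
      = ∑ ω, ∑ v, (p ω * if g ω = v ∧ A ω then f ω else 0) :=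
        Finset.sum_congr rfl fun ω _ => key ω
    _ = ∑ v, ∑ ω, (p ω * if g ω = v ∧ A ω then f ω else 0) := Finset.sum_comm
    _ = _ := by
        refine Finset.sum_congr rfl fun v _ => Finset.sum_congr rfl fun ω _ => ?_; congr

theorem Pr_fiberR (g : Ω → ℝ) (A : Ω → Prop) :
    Pr p A = ∑ v ∈ Finset.image g Finset.univ, Pr p (fun ω => g ω = v ∧ A ω) := by
  have key : ∀ ω, (if A ω then p ω else 0)
      = ∑ v ∈ Finset.image g Finset.univ, (if g ω = v ∧ A ω then p ω else 0) := by
    intro ω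
    rw [Finset.sum_eq_single_of_mem (g ω) (Finset.mem_image_of_mem g (mem_univ ω))]
    · simp
    · intro v _ hv
      exact if_neg (fun h : g ω = v ∧ A ω => hv h.1.symm)
  unfold Pr
  calc (∑ ω, if A ω then p ω else 0)
      = ∑ ω, ∑ v ∈ Finset.image g Finset.univ, (if g ω = v ∧ A ω then p ω else 0) :=
        Finset.sum_congr rfl fun ω _ => key ω
    _ = ∑ v ∈ Finset.image g Finset.univ, ∑ ω, (if g ω = v ∧ A ω then p ω else 0) :=
        Finset.sum_comm
    _ = ∑ v ∈ Finset.image g Finset.univ, Pr p (fun ω => g ω = v ∧ A ω) := by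
        refine Finset.sum_congr rfl fun v _ => Finset.sum_congr rfl fun ω _ => ?_; congr

theorem Ex_fiberR (g : Ω → ℝ) (A : Ω → Prop) :
    ExC p A g = ∑ v ∈ Finset.image g Finset.univ, v * Pr p (fun ω => g ω = v ∧ A ω) := by
  have key : ∀ ω, (p ω * if A ω then g ω else 0)
      = ∑ v ∈ Finset.image g Finset.univ, v * (if g ω = v ∧ A ω then p ω else 0) := by
    intro ω
    rw [Finset.sum_eq_single_of_mem (g ω) (Finset.mem_image_of_mem g (mem_univ ω))]
    · by_cases hA : A ω <;> simp [hA, mul_comm]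
    · intro v _ hv
      rw [if_neg (fun h : g ω = v ∧ A ω => hv h.1.symm), mul_zero]
  unfold ExC Ex Pr
  calc (∑ ω, p ω * if A ω then g ω else 0)
      = ∑ ω, ∑ v ∈ Finset.image g Finset.univ, v * (if g ω = v ∧ A ω then p ω else 0) :=
        Finset.sum_congr rfl fun ω _ => key ω
    _ = ∑ v ∈ Finset.image g Finset.univ, ∑ ω, v * (if g ω = v ∧ A ω then p ω else 0) :=
        Finset.sum_comm
    _ = ∑ v ∈ Finset.image g Finset.univ, v * ∑ ω, (if g ω = v ∧ A ω then p ω else 0) :=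
        Finset.sum_congr rfl fun v _ => (Finset.mul_sum _ _ _).symm
    _ = ∑ v ∈ Finset.image g Finset.univ, v * Pr p (fun ω => g ω = v ∧ A ω) := by
        refine Finset.sum_congr rfl fun v _ => ?_; congr 1; refine Finset.sum_congr rfl fun ω _ => ?_; congr

theorem transferP (g : Ω → ℝ) {A B : Ω → Prop} {c c' : ℝ}
    (h : ∀ yv, Pr p (fun ω => g ω = yv ∧ A ω) * c = Pr p (fun ω => g ω = yv ∧ B ω) * c') :
    Pr p A * c = Pr p B * c' := by
  rw [Pr_fiberR g A, Pr_fiberR g B, Finset.sum_mul, Finset.sum_mul]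
  exact Finset.sum_congr rfl fun v _ => h v

theorem transferP' {α : Type*} [Fintype α] (g : Ω → α) {A B : Ω → Prop} {c c' : ℝ}
    (h : ∀ v, Pr p (fun ω => g ω = v ∧ A ω) * c = Pr p (fun ω => g ω = v ∧ B ω) * c') :
    Pr p A * c = Pr p B * c' := by
  rw [Pr_fiber g A, Pr_fiber g B, Finset.sum_mul, Finset.sum_mul]
  exact Finset.sum_congr rfl fun v _ => h v

theorem transferE (g : Ω → ℝ) {A B : Ω → Prop} {c c' : ℝ}
    (h : ∀ yv, Pr p (fun ω => g ω = yv ∧ A ω) * c = Pr p (fun ω => g ω = yv ∧ B ω) * c') :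
    ExC p A g * c = ExC p B g * c' := by
  rw [Ex_fiberR g A, Ex_fiberR g B, Finset.sum_mul, Finset.sum_mul]
  refine Finset.sum_congr rfl fun v _ => ?_
  linear_combination v * h v

end helpers
/-- Nonparametric identification of the cross-world mean in the
discrete case (Theorem 1 of the paper).  Potential values: `D1, D0` are the binary
potential post-treatment events, `Mpot z d ω = M_{zd}(ω)` are the potential
mediators, `Ypot z d m ω = Y_{zdm}(ω)` are the potential outcomes.  Under
consistency, standard monotonicity, ignorability of treatment, generalized
principal ignorability, ignorability of the mediator, and positivity, for any
treatment levels `z, z'` and stratum `u = (d1, d0)` with `P(U=u) > 0`,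
`E[Y_{z M_{z'}} | U = u]
 = Σ_x (P(U=u | X=x) / P(U=u)) · Σ_m E[Y | Z=z, D=d_z, M=m, X=x]
     · P(M=m | Z=z', D=d_{z'}, X=x) · P(X=x)`,
where `d_z = d1` if `z = 1` and `d_z = d0` if `z = 0`. -/
theorem crossworld_mean_identification
    {Ω 𝒳 ℳ : Type*} [Fintype Ω] [Fintype 𝒳] [Fintype ℳ]
    (p : Ω → ℝ) (hp : ∀ ω, 0 ≤ p ω) (hpsum : ∑ ω, p ω = 1)
    (Z D1 D0 : Ω → Bool) (X : Ω → 𝒳)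
    (Mpot : Bool → Bool → Ω → ℳ) (Ypot : Bool → Bool → ℳ → Ω → ℝ)
    (D : Ω → Bool) (M : Ω → ℳ) (Y : Ω → ℝ)
    -- (i) consistency
    (hD : ∀ ω, D ω = if Z ω then D1 ω else D0 ω)
    (hM : ∀ ω, M ω = Mpot (Z ω) (D ω) ω)
    (hY : ∀ ω, Y ω = Ypot (Z ω) (D ω) (M ω) ω)
    -- standard monotonicity: D1 ≥ D0 almost surely
    (hmono : ∀ ω, 0 < p ω → D0 ω ≤ D1 ω)
    -- (ii) ignorability of the treatment assignment:
    -- (D_z, M_{z'd'}, Y_{zsd'ms}) ⊥ Z | X for all indices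
    (hig : ∀ (z z' zs d' : Bool) (ms : ℳ) (dv : Bool) (mv : ℳ) (yv : ℝ)
        (zv : Bool) (x : 𝒳),
      Pr p (fun ω => (if z then D1 ω else D0 ω) = dv ∧ Mpot z' d' ω = mv ∧
            Ypot zs d' ms ω = yv ∧ Z ω = zv ∧ X ω = x) *
          Pr p (fun ω => X ω = x) =
        Pr p (fun ω => (if z then D1 ω else D0 ω) = dv ∧ Mpot z' d' ω = mv ∧
            Ypot zs d' ms ω = yv ∧ X ω = x) *
          Pr p (fun ω => Z ω = zv ∧ X ω = x))
    -- (iii) generalized principal ignorability: (M_{zd}, Y_{z'dm'}) ⊥ U | X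
    (hpi : ∀ (z z' d : Bool) (m' : ℳ) (mv : ℳ) (yv : ℝ) (u1 u0 : Bool) (x : 𝒳),
      Pr p (fun ω => Mpot z d ω = mv ∧ Ypot z' d m' ω = yv ∧
            D1 ω = u1 ∧ D0 ω = u0 ∧ X ω = x) *
          Pr p (fun ω => X ω = x) =
        Pr p (fun ω => Mpot z d ω = mv ∧ Ypot z' d m' ω = yv ∧ X ω = x) *
          Pr p (fun ω => D1 ω = u1 ∧ D0 ω = u0 ∧ X ω = x))
    -- (iv) ignorability of the mediator: M_{zd} ⊥ Y_{z'd'm'} | (Z, U, X)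
    (hmi : ∀ (z z' d d' : Bool) (m' : ℳ) (mv : ℳ) (yv : ℝ)
        (zv u1 u0 : Bool) (x : 𝒳),
      Pr p (fun ω => Mpot z d ω = mv ∧ Ypot z' d' m' ω = yv ∧
            Z ω = zv ∧ D1 ω = u1 ∧ D0 ω = u0 ∧ X ω = x) *
          Pr p (fun ω => Z ω = zv ∧ D1 ω = u1 ∧ D0 ω = u0 ∧ X ω = x) =
        Pr p (fun ω => Mpot z d ω = mv ∧
            Z ω = zv ∧ D1 ω = u1 ∧ D0 ω = u0 ∧ X ω = x) *
          Pr p (fun ω => Ypot z' d' m' ω = yv ∧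
            Z ω = zv ∧ D1 ω = u1 ∧ D0 ω = u0 ∧ X ω = x))
    -- (v) positivity of all conditioning events
    (hposX : ∀ x, 0 < Pr p (fun ω => X ω = x))
    (hposcell : ∀ (zv dv : Bool) (mv : ℳ) (x : 𝒳),
      0 < Pr p (fun ω => Z ω = zv ∧ D ω = dv ∧ M ω = mv ∧ X ω = x))
    (z z' d1 d0 : Bool)
    (hU : 0 < Pr p (fun ω => D1 ω = d1 ∧ D0 ω = d0)) :
    -- E[Y_{z M_{z'}} | U = (d1, d0)]
    Ex p (fun ω =>
        if D1 ω = d1 ∧ D0 ω = d0 then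
          Ypot z (if z then D1 ω else D0 ω)
            (Mpot z' (if z' then D1 ω else D0 ω) ω) ω
        else 0) /
        Pr p (fun ω => D1 ω = d1 ∧ D0 ω = d0) =
      ∑ x,
        (Pr p (fun ω => D1 ω = d1 ∧ D0 ω = d0 ∧ X ω = x) /
            Pr p (fun ω => X ω = x) /
          Pr p (fun ω => D1 ω = d1 ∧ D0 ω = d0)) *
        (∑ m,
          (Ex p (fun ω =>
              if Z ω = z ∧ D ω = (if z then d1 else d0) ∧ M ω = m ∧ X ω = x
              then Y ω else 0) /
            Pr p (fun ω =>
              Z ω = z ∧ D ω = (if z then d1 else d0) ∧ M ω = m ∧ X ω = x)) *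
          (Pr p (fun ω =>
              M ω = m ∧ Z ω = z' ∧ D ω = (if z' then d1 else d0) ∧ X ω = x) /
            Pr p (fun ω =>
              Z ω = z' ∧ D ω = (if z' then d1 else d0) ∧ X ω = x))) *
        Pr p (fun ω => X ω = x) := by
    classical
  have hΩ : Nonempty Ω := by
    by_contra h
    rw [not_nonempty_iff] at h
    rw [Finset.univ_eq_empty, Finset.sum_empty] at hpsum
    exact absurd hpsum (by norm_num)
  obtain ⟨ω₀⟩ := hΩ
  set a := (if z then d1 else d0) with ha
  set b := (if z' then d1 else d0) with hb
  set m₀ := M ω₀ with hm₀def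
  have hmono' : ∀ ω, 0 < p ω → D0 ω = true → D1 ω = true := by
    intro ω hω h0
    have h := hmono ω hω
    rw [h0] at h
    cases h1 : D1 ω
    · rw [h1] at h; exact absurd h (by decide)
    · rfl
  -- variant of hig with the mediator variable marginalised out
  have higY : ∀ (t dv zv : Bool) (m : ℳ) (yv : ℝ) (x : 𝒳),
      Pr p (fun ω => Ypot z a m ω = yv ∧ (if t then D1 ω else D0 ω) = dv ∧ Z ω = zv ∧ X ω = x)
          * Pr p (fun ω => X ω = x)
        = Pr p (fun ω => Ypot z a m ω = yv ∧ (if t then D1 ω else D0 ω) = dv ∧ X ω = x)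
          * Pr p (fun ω => Z ω = zv ∧ X ω = x) := by
    intro t dv zv m yv x
    refine transferP' (Mpot z a) fun mv => ?_
    have H := hig t z z a m dv mv yv zv x
    convert H using 3 <;> (funext ω; simp only [eq_iff_iff]; tauto)
  -- D1 / D0 specialisations
  have hQ1 : ∀ (dv zv : Bool) (m : ℳ) (yv : ℝ) (x : 𝒳),
      Pr p (fun ω => Ypot z a m ω = yv ∧ D1 ω = dv ∧ Z ω = zv ∧ X ω = x)
          * Pr p (fun ω => X ω = x)
        = Pr p (fun ω => Ypot z a m ω = yv ∧ D1 ω = dv ∧ X ω = x)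
          * Pr p (fun ω => Z ω = zv ∧ X ω = x) := by
    intro dv zv m yv x
    have H := higY true dv zv m yv x
    simpa using H
  have hQ0 : ∀ (dv zv : Bool) (m : ℳ) (yv : ℝ) (x : 𝒳),
      Pr p (fun ω => Ypot z a m ω = yv ∧ D0 ω = dv ∧ Z ω = zv ∧ X ω = x)
          * Pr p (fun ω => X ω = x)
        = Pr p (fun ω => Ypot z a m ω = yv ∧ D0 ω = dv ∧ X ω = x)
          * Pr p (fun ω => Z ω = zv ∧ X ω = x) := by
    intro dv zv m yv x
    have H := higY false dv zv m yv x
    simpa using H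
  -- (M_{z'd'}, D_t) ⊥ Z | X  (yv marginalised out of hig)
  have hig2 : ∀ (t zq dq dv : Bool) (mv : ℳ) (zv : Bool) (x : 𝒳),
      Pr p (fun ω => Mpot zq dq ω = mv ∧ (if t then D1 ω else D0 ω) = dv ∧ Z ω = zv ∧ X ω = x)
          * Pr p (fun ω => X ω = x)
        = Pr p (fun ω => Mpot zq dq ω = mv ∧ (if t then D1 ω else D0 ω) = dv ∧ X ω = x)
          * Pr p (fun ω => Z ω = zv ∧ X ω = x) := by
    intro t zq dq dv mv zv x
    refine transferP (Ypot z dq m₀) fun yv => ?_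
    have H := hig t zq z dq m₀ dv mv yv zv x
    convert H using 3 <;> (funext ω; simp only [eq_iff_iff]; tauto)
  -- D_t ⊥ Z | X
  have hig1 : ∀ (t dv zv : Bool) (x : 𝒳),
      Pr p (fun ω => (if t then D1 ω else D0 ω) = dv ∧ Z ω = zv ∧ X ω = x)
          * Pr p (fun ω => X ω = x)
        = Pr p (fun ω => (if t then D1 ω else D0 ω) = dv ∧ X ω = x)
          * Pr p (fun ω => Z ω = zv ∧ X ω = x) := by
    intro t dv zv x
    refine transferP' (Mpot z a) fun mv => ?_
    have H := hig2 t z a dv mv zv x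
    convert H using 3 <;> (funext ω; simp only [eq_iff_iff]; tauto)
  -- (Y_{zam}, U) ⊥ Z | X : needs monotonicity
  have hA : ∀ (m : ℳ) (yv : ℝ) (u1 u0 zv : Bool) (x : 𝒳),
      Pr p (fun ω => Ypot z a m ω = yv ∧ Z ω = zv ∧ D1 ω = u1 ∧ D0 ω = u0 ∧ X ω = x)
          * Pr p (fun ω => X ω = x)
        = Pr p (fun ω => Ypot z a m ω = yv ∧ D1 ω = u1 ∧ D0 ω = u0 ∧ X ω = x)
          * Pr p (fun ω => Z ω = zv ∧ X ω = x) := by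
    intro m yv u1 u0 zv x
    cases u1 <;> cases u0
    · -- never-taker: D1 = false, D0 = false
      have e1 : Pr p (fun ω => Ypot z a m ω = yv ∧ Z ω = zv ∧ D1 ω = false ∧ D0 ω = false ∧ X ω = x)
          = Pr p (fun ω => Ypot z a m ω = yv ∧ D1 ω = false ∧ Z ω = zv ∧ X ω = x) := by
        refine Pr_congr' hp fun ω hω => ?_
        have hmo := hmono' ω hω
        constructor
        · rintro ⟨h1, h2, h3, h4, h5⟩; exact ⟨h1, h3, h2, h5⟩
        · rintro ⟨h1, h2, h3, h4⟩
          refine ⟨h1, h3, h2, ?_, h4⟩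
          cases h0 : D0 ω
          · rfl
          · have := hmo h0; rw [h2] at this; exact absurd this (by decide)
      have e2 : Pr p (fun ω => Ypot z a m ω = yv ∧ D1 ω = false ∧ D0 ω = false ∧ X ω = x)
          = Pr p (fun ω => Ypot z a m ω = yv ∧ D1 ω = false ∧ X ω = x) := by
        refine Pr_congr' hp fun ω hω => ?_
        have hmo := hmono' ω hω
        constructor
        · rintro ⟨h1, h2, h3, h4⟩; exact ⟨h1, h2, h4⟩
        · rintro ⟨h1, h2, h3⟩
          refine ⟨h1, h2, ?_, h3⟩
          cases h0 : D0 ω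
          · rfl
          · have := hmo h0; rw [h2] at this; exact absurd this (by decide)
      rw [e1, e2]; exact hQ1 false zv m yv x
    · -- defier: impossible
      have e1 : Pr p (fun ω => Ypot z a m ω = yv ∧ Z ω = zv ∧ D1 ω = false ∧ D0 ω = true ∧ X ω = x) = 0 := by
        refine Pr_eq_zero hp fun ω hω h => ?_
        have := hmono' ω hω h.2.2.2.1; rw [h.2.2.1] at this; exact absurd this (by decide)
      have e2 : Pr p (fun ω => Ypot z a m ω = yv ∧ D1 ω = false ∧ D0 ω = true ∧ X ω = x) = 0 := by
        refine Pr_eq_zero hp fun ω hω h => ?_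
        have := hmono' ω hω h.2.2.1; rw [h.2.1] at this; exact absurd this (by decide)
      rw [e1, e2]; ring
    · -- complier: D1 = true, D0 = false ; use linearity
      have s1 : Pr p (fun ω => Ypot z a m ω = yv ∧ D1 ω = true ∧ Z ω = zv ∧ X ω = x)
          = Pr p (fun ω => Ypot z a m ω = yv ∧ D0 ω = true ∧ Z ω = zv ∧ X ω = x)
            + Pr p (fun ω => Ypot z a m ω = yv ∧ Z ω = zv ∧ D1 ω = true ∧ D0 ω = false ∧ X ω = x) := by
        rw [Pr_fiber D0 (fun ω => Ypot z a m ω = yv ∧ D1 ω = true ∧ Z ω = zv ∧ X ω = x),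
          Fintype.sum_bool]
        congr 1
        · refine Pr_congr' hp fun ω hω => ?_
          have hmo := hmono' ω hω
          constructor
          · rintro ⟨h0, h1, h2, h3, h4⟩; exact ⟨h1, h0, h3, h4⟩
          · rintro ⟨h1, h2, h3, h4⟩; exact ⟨h2, h1, hmo h2, h3, h4⟩
        · exact Pr_congr fun ω => by tauto
      have s2 : Pr p (fun ω => Ypot z a m ω = yv ∧ D1 ω = true ∧ X ω = x)
          = Pr p (fun ω => Ypot z a m ω = yv ∧ D0 ω = true ∧ X ω = x)
            + Pr p (fun ω => Ypot z a m ω = yv ∧ D1 ω = true ∧ D0 ω = false ∧ X ω = x) := by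
        rw [Pr_fiber D0 (fun ω => Ypot z a m ω = yv ∧ D1 ω = true ∧ X ω = x),
          Fintype.sum_bool]
        congr 1
        · refine Pr_congr' hp fun ω hω => ?_
          have hmo := hmono' ω hω
          constructor
          · rintro ⟨h0, h1, h2, h3⟩; exact ⟨h1, h0, h3⟩
          · rintro ⟨h1, h2, h3⟩; exact ⟨h2, h1, hmo h2, h3⟩
        · exact Pr_congr fun ω => by tauto
      have q1 := hQ1 true zv m yv x
      have q0 := hQ0 true zv m yv x
      linear_combination q1 - q0 - Pr p (fun ω => X ω = x) * s1
        + Pr p (fun ω => Z ω = zv ∧ X ω = x) * s2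
    · -- always-taker: D1 = true, D0 = true
      have e1 : Pr p (fun ω => Ypot z a m ω = yv ∧ Z ω = zv ∧ D1 ω = true ∧ D0 ω = true ∧ X ω = x)
          = Pr p (fun ω => Ypot z a m ω = yv ∧ D0 ω = true ∧ Z ω = zv ∧ X ω = x) := by
        refine Pr_congr' hp fun ω hω => ?_
        have hmo := hmono' ω hω
        constructor
        · rintro ⟨h1, h2, h3, h4, h5⟩; exact ⟨h1, h4, h2, h5⟩
        · rintro ⟨h1, h2, h3, h4⟩; exact ⟨h1, h3, hmo h2, h2, h4⟩
      have e2 : Pr p (fun ω => Ypot z a m ω = yv ∧ D1 ω = true ∧ D0 ω = true ∧ X ω = x)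
          = Pr p (fun ω => Ypot z a m ω = yv ∧ D0 ω = true ∧ X ω = x) := by
        refine Pr_congr' hp fun ω hω => ?_
        have hmo := hmono' ω hω
        constructor
        · rintro ⟨h1, h2, h3, h4⟩; exact ⟨h1, h3, h4⟩
        · rintro ⟨h1, h2, h3⟩; exact ⟨h1, hmo h2, h2, h3⟩
      rw [e1, e2]; exact hQ0 true zv m yv x
  -- U ⊥ Z | X
  have hAm : ∀ (u1 u0 zv : Bool) (x : 𝒳),
      Pr p (fun ω => Z ω = zv ∧ D1 ω = u1 ∧ D0 ω = u0 ∧ X ω = x) * Pr p (fun ω => X ω = x)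
        = Pr p (fun ω => D1 ω = u1 ∧ D0 ω = u0 ∧ X ω = x) * Pr p (fun ω => Z ω = zv ∧ X ω = x) :=
    fun u1 u0 zv x => transferP (Ypot z a m₀) fun yv => hA m₀ yv u1 u0 zv x
  -- Y_{zam} ⊥ U | X  (from generalized principal ignorability)
  have hB : ∀ (m : ℳ) (yv : ℝ) (u1 u0 : Bool) (x : 𝒳),
      Pr p (fun ω => Ypot z a m ω = yv ∧ D1 ω = u1 ∧ D0 ω = u0 ∧ X ω = x) * Pr p (fun ω => X ω = x)
        = Pr p (fun ω => Ypot z a m ω = yv ∧ X ω = x)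
          * Pr p (fun ω => D1 ω = u1 ∧ D0 ω = u0 ∧ X ω = x) := by
    intro m yv u1 u0 x
    exact transferP' (Mpot z a) fun mv => hpi z z a m mv yv u1 u0 x
  have hBE : ∀ (m : ℳ) (u1 u0 : Bool) (x : 𝒳),
      ExC p (fun ω => D1 ω = u1 ∧ D0 ω = u0 ∧ X ω = x) (Ypot z a m)
          * Pr p (fun ω => X ω = x)
        = ExC p (fun ω => X ω = x) (Ypot z a m)
          * Pr p (fun ω => D1 ω = u1 ∧ D0 ω = u0 ∧ X ω = x) :=
    fun m u1 u0 x => transferE (Ypot z a m) fun yv => hB m yv u1 u0 x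
  -- M_{z'b} ⊥ U | X
  have hC : ∀ (mv : ℳ) (u1 u0 : Bool) (x : 𝒳),
      Pr p (fun ω => Mpot z' b ω = mv ∧ D1 ω = u1 ∧ D0 ω = u0 ∧ X ω = x) * Pr p (fun ω => X ω = x)
        = Pr p (fun ω => Mpot z' b ω = mv ∧ X ω = x)
          * Pr p (fun ω => D1 ω = u1 ∧ D0 ω = u0 ∧ X ω = x) := by
    intro mv u1 u0 x
    refine transferP (Ypot z' b m₀) fun yv => ?_
    have H := hpi z' z' b m₀ mv yv u1 u0 x
    convert H using 3 <;> (funext ω; simp only [eq_iff_iff]; tauto)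
  -- mediator ignorability, expectation form
  have hS1 : ∀ (zq dq : Bool) (m : ℳ) (zv u1 u0 : Bool) (x : 𝒳),
      ExC p (fun ω => Mpot zq dq ω = m ∧ Z ω = zv ∧ D1 ω = u1 ∧ D0 ω = u0 ∧ X ω = x) (Ypot z a m)
          * Pr p (fun ω => Z ω = zv ∧ D1 ω = u1 ∧ D0 ω = u0 ∧ X ω = x)
        = ExC p (fun ω => Z ω = zv ∧ D1 ω = u1 ∧ D0 ω = u0 ∧ X ω = x) (Ypot z a m)
          * Pr p (fun ω => Mpot zq dq ω = m ∧ Z ω = zv ∧ D1 ω = u1 ∧ D0 ω = u0 ∧ X ω = x) := by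
    intro zq dq m zv u1 u0 x
    refine transferE (Ypot z a m) fun yv => ?_
    have H := hmi zq z dq a m m yv zv u1 u0 x
    have e : Pr p (fun ω => Ypot z a m ω = yv ∧ Mpot zq dq ω = m ∧ Z ω = zv ∧ D1 ω = u1 ∧ D0 ω = u0 ∧ X ω = x)
        = Pr p (fun ω => Mpot zq dq ω = m ∧ Ypot z a m ω = yv ∧ Z ω = zv ∧ D1 ω = u1 ∧ D0 ω = u0 ∧ X ω = x) :=
      Pr_congr fun ω => by tauto
    rw [e, H]; ring
  -- Y ⊥ (Z, U) | X, expectation form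
  have hS2 : ∀ (m : ℳ) (zv u1 u0 : Bool) (x : 𝒳),
      ExC p (fun ω => Z ω = zv ∧ D1 ω = u1 ∧ D0 ω = u0 ∧ X ω = x) (Ypot z a m)
          * Pr p (fun ω => X ω = x)
        = ExC p (fun ω => X ω = x) (Ypot z a m)
          * Pr p (fun ω => Z ω = zv ∧ D1 ω = u1 ∧ D0 ω = u0 ∧ X ω = x) := by
    intro m zv u1 u0 x
    refine transferE (Ypot z a m) fun yv => ?_
    have hPX := (hposX x).ne'
    have h1 := hA m yv u1 u0 zv x
    have h2 := hB m yv u1 u0 x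
    have h3 := hAm u1 u0 zv x
    apply mul_right_cancel₀ hPX
    linear_combination Pr p (fun ω => X ω = x) * h1
      + Pr p (fun ω => Z ω = zv ∧ X ω = x) * h2
      - Pr p (fun ω => Ypot z a m ω = yv ∧ X ω = x) * h3
  -- the key "observed cell" identity, stratum by stratum
  have hS3 : ∀ (zq dq : Bool) (m : ℳ) (zv u1 u0 : Bool) (x : 𝒳),
      ExC p (fun ω => Mpot zq dq ω = m ∧ Z ω = zv ∧ D1 ω = u1 ∧ D0 ω = u0 ∧ X ω = x) (Ypot z a m)
          * Pr p (fun ω => X ω = x)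
        = Pr p (fun ω => Mpot zq dq ω = m ∧ Z ω = zv ∧ D1 ω = u1 ∧ D0 ω = u0 ∧ X ω = x)
          * ExC p (fun ω => X ω = x) (Ypot z a m) := by
    intro zq dq m zv u1 u0 x
    by_cases hc : Pr p (fun ω => Z ω = zv ∧ D1 ω = u1 ∧ D0 ω = u0 ∧ X ω = x) = 0
    · have e1 : ExC p (fun ω => Mpot zq dq ω = m ∧ Z ω = zv ∧ D1 ω = u1 ∧ D0 ω = u0 ∧ X ω = x)
          (Ypot z a m) = 0 :=
        Ex_zero_mono hp
          (fun ω (h : Mpot zq dq ω = m ∧ Z ω = zv ∧ D1 ω = u1 ∧ D0 ω = u0 ∧ X ω = x) => h.2)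
          hc (Ypot z a m)
      have e2 : Pr p (fun ω => Mpot zq dq ω = m ∧ Z ω = zv ∧ D1 ω = u1 ∧ D0 ω = u0 ∧ X ω = x) = 0 :=
        Pr_zero_mono hp
          (fun ω (h : Mpot zq dq ω = m ∧ Z ω = zv ∧ D1 ω = u1 ∧ D0 ω = u0 ∧ X ω = x) => h.2)
          hc
      rw [e1, e2]
      ring
    · refine mul_right_cancel₀ hc ?_
      have h1 := hS1 zq dq m zv u1 u0 x
      have h2 := hS2 m zv u1 u0 x
      linear_combination Pr p (fun ω => X ω = x) * h1
        + Pr p (fun ω => Mpot zq dq ω = m ∧ Z ω = zv ∧ D1 ω = u1 ∧ D0 ω = u0 ∧ X ω = x) * h2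
  -- splitting an event on D_t into principal strata
  have hDsplit : ∀ (R : Ω → Prop) (t av : Bool),
      Pr p (fun ω => R ω ∧ (if t then D1 ω else D0 ω) = av)
        = ∑ cv : Bool, Pr p (fun ω => R ω ∧ D1 ω = (if t then av else cv)
            ∧ D0 ω = (if t then cv else av)) := by
    intro R t av
    rw [Pr_fiber (fun ω => if t then D0 ω else D1 ω)
      (fun ω => R ω ∧ (if t then D1 ω else D0 ω) = av)]
    refine Finset.sum_congr rfl fun cv _ => Pr_congr fun ω => ?_
    cases t <;> simp <;> tauto
  have hDsplitE : ∀ (f : Ω → ℝ) (R : Ω → Prop) (t av : Bool),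
      ExC p (fun ω => R ω ∧ (if t then D1 ω else D0 ω) = av) f
        = ∑ cv : Bool, ExC p (fun ω => R ω ∧ D1 ω = (if t then av else cv)
            ∧ D0 ω = (if t then cv else av)) f := by
    intro f R t av
    rw [Ex_fiber (fun ω => if t then D0 ω else D1 ω) f
      (fun ω => R ω ∧ (if t then D1 ω else D0 ω) = av)]
    refine Finset.sum_congr rfl fun cv _ => Ex_congr (fun ω => ?_) fun ω _ => rfl
    cases t <;> simp <;> tauto
  -- the key pointwise identity
  have main : ∀ (x : 𝒳) (m : ℳ),
      ExC p (fun ω => Mpot z' b ω = m ∧ D1 ω = d1 ∧ D0 ω = d0 ∧ X ω = x) (Ypot z a m)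
        = (Ex p (fun ω => if Z ω = z ∧ D ω = a ∧ M ω = m ∧ X ω = x then Y ω else 0)
              / Pr p (fun ω => Z ω = z ∧ D ω = a ∧ M ω = m ∧ X ω = x))
          * (Pr p (fun ω => M ω = m ∧ Z ω = z' ∧ D ω = b ∧ X ω = x)
              / Pr p (fun ω => Z ω = z' ∧ D ω = b ∧ X ω = x))
          * Pr p (fun ω => D1 ω = d1 ∧ D0 ω = d0 ∧ X ω = x) := by
    intro x m
    -- Step 1 : split the cross-world expectation over Z and use hS3, hC
    have hfib : ExC p (fun ω => Mpot z' b ω = m ∧ D1 ω = d1 ∧ D0 ω = d0 ∧ X ω = x) (Ypot z a m)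
        = ∑ zv : Bool, ExC p (fun ω => Mpot z' b ω = m ∧ Z ω = zv ∧ D1 ω = d1 ∧ D0 ω = d0 ∧ X ω = x)
            (Ypot z a m) := by
      rw [Ex_fiber Z (Ypot z a m) (fun ω => Mpot z' b ω = m ∧ D1 ω = d1 ∧ D0 ω = d0 ∧ X ω = x)]
      exact Finset.sum_congr rfl fun zv _ => Ex_congr (fun ω => by tauto) fun ω _ => rfl
    have hfibP : Pr p (fun ω => Mpot z' b ω = m ∧ D1 ω = d1 ∧ D0 ω = d0 ∧ X ω = x)
        = ∑ zv : Bool, Pr p (fun ω => Mpot z' b ω = m ∧ Z ω = zv ∧ D1 ω = d1 ∧ D0 ω = d0 ∧ X ω = x) := by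
      rw [Pr_fiber Z (fun ω => Mpot z' b ω = m ∧ D1 ω = d1 ∧ D0 ω = d0 ∧ X ω = x)]
      exact Finset.sum_congr rfl fun zv _ => Pr_congr fun ω => by tauto
    have S5a : ExC p (fun ω => Mpot z' b ω = m ∧ D1 ω = d1 ∧ D0 ω = d0 ∧ X ω = x) (Ypot z a m)
          * Pr p (fun ω => X ω = x)
        = Pr p (fun ω => Mpot z' b ω = m ∧ D1 ω = d1 ∧ D0 ω = d0 ∧ X ω = x)
          * ExC p (fun ω => X ω = x) (Ypot z a m) := by
      rw [hfib, hfibP, Finset.sum_mul, Finset.sum_mul]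
      exact Finset.sum_congr rfl fun zv _ => hS3 z' b m zv d1 d0 x
    have S5 : ExC p (fun ω => Mpot z' b ω = m ∧ D1 ω = d1 ∧ D0 ω = d0 ∧ X ω = x) (Ypot z a m)
          * (Pr p (fun ω => X ω = x) * Pr p (fun ω => X ω = x))
        = Pr p (fun ω => Mpot z' b ω = m ∧ X ω = x)
          * Pr p (fun ω => D1 ω = d1 ∧ D0 ω = d0 ∧ X ω = x)
          * ExC p (fun ω => X ω = x) (Ypot z a m) := by
      have hc := hC m d1 d0 x
      linear_combination Pr p (fun ω => X ω = x) * S5a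
        + ExC p (fun ω => X ω = x) (Ypot z a m) * hc
    -- Step 2 : the numerator of the observed outcome regression
    have hiffcell : ∀ ω, (Z ω = z ∧ D ω = a ∧ M ω = m ∧ X ω = x)
        ↔ ((Mpot z a ω = m ∧ Z ω = z ∧ X ω = x) ∧ (if z then D1 ω else D0 ω) = a) := by
      intro ω
      constructor
      · rintro ⟨h1, h2, h3, h4⟩
        have hd : (if z then D1 ω else D0 ω) = a := by rw [← h1, ← hD ω]; exact h2
        have hm' : Mpot z a ω = m := by rw [← h1, ← h2, ← hM ω]; exact h3
        exact ⟨⟨hm', h1, h4⟩, hd⟩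
      · rintro ⟨⟨hm', h1, h4⟩, hd⟩
        have h2 : D ω = a := by rw [hD ω, h1]; exact hd
        refine ⟨h1, h2, ?_, h4⟩
        rw [hM ω, h1, h2]; exact hm'
    have hcellE : Ex p (fun ω => if Z ω = z ∧ D ω = a ∧ M ω = m ∧ X ω = x then Y ω else 0)
        = ExC p (fun ω => (Mpot z a ω = m ∧ Z ω = z ∧ X ω = x) ∧ (if z then D1 ω else D0 ω) = a)
            (Ypot z a m) := by
      rw [Ex_eq_ExC]
      refine Ex_congr (fun ω => hiffcell ω) fun ω h => ?_
      obtain ⟨h1, h2, h3, h4⟩ := h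
      rw [hY ω, h1, h2, h3]
    have hcellP : Pr p (fun ω => Z ω = z ∧ D ω = a ∧ M ω = m ∧ X ω = x)
        = Pr p (fun ω => (Mpot z a ω = m ∧ Z ω = z ∧ X ω = x) ∧ (if z then D1 ω else D0 ω) = a) :=
      Pr_congr hiffcell
    have S4 : Ex p (fun ω => if Z ω = z ∧ D ω = a ∧ M ω = m ∧ X ω = x then Y ω else 0)
          * Pr p (fun ω => X ω = x)
        = Pr p (fun ω => Z ω = z ∧ D ω = a ∧ M ω = m ∧ X ω = x)
          * ExC p (fun ω => X ω = x) (Ypot z a m) := by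
      rw [hcellE, hcellP,
        hDsplitE (Ypot z a m) (fun ω => Mpot z a ω = m ∧ Z ω = z ∧ X ω = x) z a,
        hDsplit (fun ω => Mpot z a ω = m ∧ Z ω = z ∧ X ω = x) z a,
        Finset.sum_mul, Finset.sum_mul]
      refine Finset.sum_congr rfl fun cv _ => ?_
      have e1 : ExC p (fun ω => (Mpot z a ω = m ∧ Z ω = z ∧ X ω = x)
              ∧ D1 ω = (if z then a else cv) ∧ D0 ω = (if z then cv else a)) (Ypot z a m)
          = ExC p (fun ω => Mpot z a ω = m ∧ Z ω = z
              ∧ D1 ω = (if z then a else cv) ∧ D0 ω = (if z then cv else a) ∧ X ω = x)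
              (Ypot z a m) :=
        Ex_congr (fun ω => by tauto) fun ω _ => rfl
      have e2 : Pr p (fun ω => (Mpot z a ω = m ∧ Z ω = z ∧ X ω = x)
              ∧ D1 ω = (if z then a else cv) ∧ D0 ω = (if z then cv else a))
          = Pr p (fun ω => Mpot z a ω = m ∧ Z ω = z
              ∧ D1 ω = (if z then a else cv) ∧ D0 ω = (if z then cv else a) ∧ X ω = x) :=
        Pr_congr fun ω => by tauto
      rw [e1, e2]
      exact hS3 z a m z (if z then a else cv) (if z then cv else a) x
    -- Step 3 : the observed mediator distribution
    have hPn : Pr p (fun ω => M ω = m ∧ Z ω = z' ∧ D ω = b ∧ X ω = x)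
        = Pr p (fun ω => Mpot z' b ω = m ∧ (if z' then D1 ω else D0 ω) = b ∧ Z ω = z' ∧ X ω = x) := by
      refine Pr_congr fun ω => ?_
      constructor
      · rintro ⟨h3, h1, h2, h4⟩
        have hd : (if z' then D1 ω else D0 ω) = b := by rw [← h1, ← hD ω]; exact h2
        have hm' : Mpot z' b ω = m := by rw [← h1, ← h2, ← hM ω]; exact h3
        exact ⟨hm', hd, h1, h4⟩
      · rintro ⟨hm', hd, h1, h4⟩
        have h2 : D ω = b := by rw [hD ω, h1]; exact hd
        refine ⟨?_, h1, h2, h4⟩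
        rw [hM ω, h1, h2]; exact hm'
    have hPd : Pr p (fun ω => Z ω = z' ∧ D ω = b ∧ X ω = x)
        = Pr p (fun ω => (if z' then D1 ω else D0 ω) = b ∧ Z ω = z' ∧ X ω = x) := by
      refine Pr_congr fun ω => ?_
      constructor
      · rintro ⟨h1, h2, h4⟩
        have hd : (if z' then D1 ω else D0 ω) = b := by rw [← h1, ← hD ω]; exact h2
        exact ⟨hd, h1, h4⟩
      · rintro ⟨hd, h1, h4⟩
        have h2 : D ω = b := by rw [hD ω, h1]; exact hd
        exact ⟨h1, h2, h4⟩
    have F4D : Pr p (fun ω => Mpot z' b ω = m ∧ (if z' then D1 ω else D0 ω) = b ∧ X ω = x)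
          * Pr p (fun ω => X ω = x)
        = Pr p (fun ω => Mpot z' b ω = m ∧ X ω = x)
          * Pr p (fun ω => (if z' then D1 ω else D0 ω) = b ∧ X ω = x) := by
      have l : Pr p (fun ω => Mpot z' b ω = m ∧ (if z' then D1 ω else D0 ω) = b ∧ X ω = x)
          = Pr p (fun ω => (Mpot z' b ω = m ∧ X ω = x) ∧ (if z' then D1 ω else D0 ω) = b) :=
        Pr_congr fun ω => by tauto
      have r : Pr p (fun ω => (if z' then D1 ω else D0 ω) = b ∧ X ω = x)
          = Pr p (fun ω => (X ω = x) ∧ (if z' then D1 ω else D0 ω) = b) :=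
        Pr_congr fun ω => by tauto
      rw [l, r, hDsplit (fun ω => Mpot z' b ω = m ∧ X ω = x) z' b,
        hDsplit (fun ω => X ω = x) z' b, Finset.sum_mul, Finset.mul_sum]
      refine Finset.sum_congr rfl fun cv _ => ?_
      have l2 : Pr p (fun ω => (Mpot z' b ω = m ∧ X ω = x)
              ∧ D1 ω = (if z' then b else cv) ∧ D0 ω = (if z' then cv else b))
          = Pr p (fun ω => Mpot z' b ω = m
              ∧ D1 ω = (if z' then b else cv) ∧ D0 ω = (if z' then cv else b) ∧ X ω = x) :=
        Pr_congr fun ω => by tauto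
      have r2 : Pr p (fun ω => (X ω = x)
              ∧ D1 ω = (if z' then b else cv) ∧ D0 ω = (if z' then cv else b))
          = Pr p (fun ω => D1 ω = (if z' then b else cv) ∧ D0 ω = (if z' then cv else b) ∧ X ω = x) :=
        Pr_congr fun ω => by tauto
      rw [l2, r2]
      exact hC m (if z' then b else cv) (if z' then cv else b) x
    have hig2' := hig2 z' z' b b m z' x
    have hig1' := hig1 z' b z' x
    have S6 : Pr p (fun ω => M ω = m ∧ Z ω = z' ∧ D ω = b ∧ X ω = x) * Pr p (fun ω => X ω = x)
        = Pr p (fun ω => Mpot z' b ω = m ∧ X ω = x)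
          * Pr p (fun ω => Z ω = z' ∧ D ω = b ∧ X ω = x) := by
      apply mul_right_cancel₀ (hposX x).ne'
      rw [hPn, hPd]
      linear_combination Pr p (fun ω => X ω = x) * hig2'
        + Pr p (fun ω => Z ω = z' ∧ X ω = x) * F4D
        - Pr p (fun ω => Mpot z' b ω = m ∧ X ω = x) * hig1'
    -- Step 4 : put everything together
    have hcellpos := hposcell z a m x
    have hPdpos : 0 < Pr p (fun ω => Z ω = z' ∧ D ω = b ∧ X ω = x) :=
      lt_of_lt_of_le (hposcell z' b m x)
        (Pr_le_mono hp fun ω h => ⟨h.1, h.2.1, h.2.2.2⟩)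
    have hK : (0:ℝ) < Pr p (fun ω => Z ω = z ∧ D ω = a ∧ M ω = m ∧ X ω = x)
        * Pr p (fun ω => Z ω = z' ∧ D ω = b ∧ X ω = x)
        * (Pr p (fun ω => X ω = x) * Pr p (fun ω => X ω = x)) :=
      mul_pos (mul_pos hcellpos hPdpos) (mul_pos (hposX x) (hposX x))
    refine mul_right_cancel₀ (ne_of_gt hK) ?_
    have expand : (Ex p (fun ω => if Z ω = z ∧ D ω = a ∧ M ω = m ∧ X ω = x then Y ω else 0)
              / Pr p (fun ω => Z ω = z ∧ D ω = a ∧ M ω = m ∧ X ω = x)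
            * (Pr p (fun ω => M ω = m ∧ Z ω = z' ∧ D ω = b ∧ X ω = x)
              / Pr p (fun ω => Z ω = z' ∧ D ω = b ∧ X ω = x))
            * Pr p (fun ω => D1 ω = d1 ∧ D0 ω = d0 ∧ X ω = x))
          * (Pr p (fun ω => Z ω = z ∧ D ω = a ∧ M ω = m ∧ X ω = x)
            * Pr p (fun ω => Z ω = z' ∧ D ω = b ∧ X ω = x)
            * (Pr p (fun ω => X ω = x) * Pr p (fun ω => X ω = x)))
        = Ex p (fun ω => if Z ω = z ∧ D ω = a ∧ M ω = m ∧ X ω = x then Y ω else 0)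
          * Pr p (fun ω => M ω = m ∧ Z ω = z' ∧ D ω = b ∧ X ω = x)
          * Pr p (fun ω => D1 ω = d1 ∧ D0 ω = d0 ∧ X ω = x)
          * (Pr p (fun ω => X ω = x) * Pr p (fun ω => X ω = x)) := by
      field_simp
    rw [expand]
    linear_combination (Pr p (fun ω => Z ω = z ∧ D ω = a ∧ M ω = m ∧ X ω = x)
          * Pr p (fun ω => Z ω = z' ∧ D ω = b ∧ X ω = x)) * S5
      - (Pr p (fun ω => D1 ω = d1 ∧ D0 ω = d0 ∧ X ω = x)
          * Pr p (fun ω => M ω = m ∧ Z ω = z' ∧ D ω = b ∧ X ω = x)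
          * Pr p (fun ω => X ω = x)) * S4
      - (Pr p (fun ω => D1 ω = d1 ∧ D0 ω = d0 ∧ X ω = x)
          * Pr p (fun ω => Z ω = z ∧ D ω = a ∧ M ω = m ∧ X ω = x)
          * ExC p (fun ω => X ω = x) (Ypot z a m)) * S6
  -- decompose the cross-world expectation over x and m
  have hN : Ex p (fun ω => if D1 ω = d1 ∧ D0 ω = d0 then
        Ypot z (if z then D1 ω else D0 ω) (Mpot z' (if z' then D1 ω else D0 ω) ω) ω else 0)
      = ∑ x : 𝒳, ∑ m : ℳ,
          ExC p (fun ω => Mpot z' b ω = m ∧ D1 ω = d1 ∧ D0 ω = d0 ∧ X ω = x) (Ypot z a m) := by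
    rw [Ex_eq_ExC]
    have e0 : ExC p (fun ω => D1 ω = d1 ∧ D0 ω = d0)
        (fun ω => Ypot z (if z then D1 ω else D0 ω) (Mpot z' (if z' then D1 ω else D0 ω) ω) ω)
        = ExC p (fun ω => D1 ω = d1 ∧ D0 ω = d0) (fun ω => Ypot z a (Mpot z' b ω) ω) :=
      Ex_congr (fun ω => Iff.rfl) fun ω h => by rw [h.1, h.2, ← ha, ← hb]
    rw [e0, Ex_fiber X (fun ω => Ypot z a (Mpot z' b ω) ω) (fun ω => D1 ω = d1 ∧ D0 ω = d0)]
    refine Finset.sum_congr rfl fun x _ => ?_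
    rw [Ex_fiber (Mpot z' b) (fun ω => Ypot z a (Mpot z' b ω) ω)
      (fun ω => X ω = x ∧ D1 ω = d1 ∧ D0 ω = d0)]
    refine Finset.sum_congr rfl fun m _ => ?_
    exact Ex_congr (fun ω => by tauto) fun ω h => by rw [h.1]
  -- final assembly
  rw [hN, Finset.sum_div]
  refine Finset.sum_congr rfl fun x _ => ?_
  have hsum : (∑ m : ℳ,
        ExC p (fun ω => Mpot z' b ω = m ∧ D1 ω = d1 ∧ D0 ω = d0 ∧ X ω = x) (Ypot z a m))
      = (∑ m : ℳ,
          (Ex p (fun ω => if Z ω = z ∧ D ω = a ∧ M ω = m ∧ X ω = x then Y ω else 0)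
              / Pr p (fun ω => Z ω = z ∧ D ω = a ∧ M ω = m ∧ X ω = x))
          * (Pr p (fun ω => M ω = m ∧ Z ω = z' ∧ D ω = b ∧ X ω = x)
              / Pr p (fun ω => Z ω = z' ∧ D ω = b ∧ X ω = x)))
        * Pr p (fun ω => D1 ω = d1 ∧ D0 ω = d0 ∧ X ω = x) := by
    rw [Finset.sum_mul]
    exact Finset.sum_congr rfl fun m _ => main x m
  rw [hsum]
  have hPX := (hposX x).ne'
  have hPU := hU.ne'
  field_simp
  refine (mul_comm _ _).trans ?_
  congr 1
  exact Finset.sum_congr rfl fun m _ => by ring
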